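/- Let Ψ and g be as in the canonical construction, with λ and λ′ the sizes of the vertex label sets. If Θ is a clause minimum prime pure Horn CNF representation of g, then |Ψ|_c/(λ+λ′) ≤ |Θ|_c ≤ |Ψ|_c. -/

import Mathlib

open Finset

/-- A clause, given by its (fin)sets of positive and negative variables. -/
structure Clause (V : Type*) where
  pos : Finset V
  neg : Finset V
deriving DecidableEq

namespace Clause

variable {V : Type*}

/-- A genuine clause: no variable occurs both positively and negatively. -/
def IsClause (C : Clause V) : Prop := Disjoint C.pos C.neg

/-- Evaluation of a clause (as a disjunction of literals) under an assignment. -/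
def eval (C : Clause V) (a : V → Bool) : Prop :=
  (∃ v ∈ C.pos, a v = true) ∨ (∃ v ∈ C.neg, a v = false)

/-- A pure (definite) Horn clause: exactly one positive literal, its head. -/
def IsPureHorn (C : Clause V) : Prop := ∃ v, C.pos = {v}

end Clause

variable {V : Type*}

/-- Conjunction (as a predicate on assignments) of a set of clauses. -/
def evalSet (S : Set (Clause V)) (a : V → Bool) : Prop := ∀ C ∈ S, C.eval a

/-- Conjunction of the clauses of a CNF, i.e. of a finite set of clauses. -/
def evalCNF (Φ : Finset (Clause V)) (a : V → Bool) : Prop := ∀ C ∈ Φ, C.eval a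

/-- A CNF represents a Boolean function `h`. -/
def Represents (Φ : Finset (Clause V)) (h : (V → Bool) → Prop) : Prop :=
  ∀ a, evalCNF Φ a ↔ h a

/-- A pure Horn CNF: all clauses are pure Horn. -/
def IsPureHornCNF (Φ : Finset (Clause V)) : Prop :=
  ∀ C ∈ Φ, C.IsClause ∧ C.IsPureHorn

/-- The forward chaining closure of a set `Q` of variables with respect to the
pure Horn CNF `Φ`: the smallest set containing `Q` such that whenever `Φ` contains
a clause `S → v` with `S` inside the set, also `v` belongs to it. -/
def fcClosure (Φ : Finset (Clause V)) (Q : Set V) : Set V :=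
  ⋂₀ {T : Set V | Q ⊆ T ∧ ∀ C ∈ Φ, ∀ v : V, C.pos = {v} → ↑C.neg ⊆ T → v ∈ T}

/-- `C` is an implicate of `h`: every assignment falsifying `C` falsifies `h`. -/
def Implicate (h : (V → Bool) → Prop) (C : Clause V) : Prop :=
  ∀ a, ¬ C.eval a → ¬ h a

/-- `C` is a prime implicate of `h`: an implicate from which no literal can be
deleted while remaining an implicate. -/
def PrimeImplicate [DecidableEq V] (h : (V → Bool) → Prop) (C : Clause V) : Prop :=
  C.IsClause ∧ Implicate h C ∧
  (∀ v ∈ C.pos, ¬ Implicate h ⟨C.pos.erase v, C.neg⟩) ∧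
  (∀ v ∈ C.neg, ¬ Implicate h ⟨C.pos, C.neg.erase v⟩)

/-- `C₁` and `C₂` are resolvable on `v`: `v` occurs positively in `C₁`, negatively in
`C₂`, and no other variable occurs with opposite signs in them. -/
def Resolvable (C₁ C₂ : Clause V) (v : V) : Prop :=
  v ∈ C₁.pos ∧ v ∈ C₂.neg ∧
  ∀ w, w ≠ v → ¬(w ∈ C₁.pos ∧ w ∈ C₂.neg) ∧ ¬(w ∈ C₁.neg ∧ w ∈ C₂.pos)

/-- The resolvent `R(C₁,C₂) = (C₁ \ {v}) ∪ (C₂ \ {v̄})`. -/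
def resolventOf [DecidableEq V] (C₁ C₂ : Clause V) (v : V) : Clause V :=
  ⟨C₁.pos.erase v ∪ C₂.pos, C₁.neg ∪ C₂.neg.erase v⟩

/-- A set of clauses closed under resolution. -/
def ResClosed [DecidableEq V] (S : Set (Clause V)) : Prop :=
  ∀ C₁ ∈ S, ∀ C₂ ∈ S, ∀ v, Resolvable C₁ C₂ v → resolventOf C₁ C₂ v ∈ S

/-- The resolution closure of a set of clauses. -/
def resClosure [DecidableEq V] (S : Set (Clause V)) : Set (Clause V) :=
  ⋂₀ {T : Set (Clause V) | S ⊆ T ∧ ResClosed T}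

/-- `I(h)`: the resolution closure of the set of prime implicates of `h`. -/
def implSet [DecidableEq V] (h : (V → Bool) → Prop) : Set (Clause V) :=
  resClosure {C | PrimeImplicate h C}

/-- An exclusive set of clauses of `h`. -/
def ExclusiveSet [DecidableEq V] (h : (V → Bool) → Prop) (Xs : Set (Clause V)) : Prop :=
  Xs ⊆ implSet h ∧
  ∀ C₁ ∈ implSet h, ∀ C₂ ∈ implSet h, ∀ v, Resolvable C₁ C₂ v →
    resolventOf C₁ C₂ v ∈ Xs → C₁ ∈ Xs ∧ C₂ ∈ Xs

/-- The set of variables occurring in a CNF. -/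
def varsOf [DecidableEq V] (Φ : Finset (Clause V)) : Finset V :=
  Φ.biUnion fun C => C.pos ∪ C.neg


/-- A Label Cover instance: a bipartite graph with parts `X` and `Y` and edge set `E`,
label sets `A` (for `X`-vertices) and `B` (for `Y`-vertices), and a nonempty
constraint relation `cst e ⊆ A × B` for every edge `e ∈ E`. -/
structure LabelCover (X Y A B : Type*) where
  E : Finset (X × Y)
  cst : X × Y → Finset (A × B)
  cst_nonempty : ∀ e ∈ E, (cst e).Nonempty

namespace LabelCover

variable {X Y A B : Type*}

/-- A labeling `(f, g)` covers an edge `(x,y)` if for every label `b ∈ g y` there is a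
label `a ∈ f x` with `(a, b)` admissible for the edge. -/
def Covers (I : LabelCover X Y A B) (f : X → Finset A) (g : Y → Finset B)
    (e : X × Y) : Prop :=
  ∀ b ∈ g e.2, ∃ a ∈ f e.1, (a, b) ∈ I.cst e

/-- A total-cover: a labeling (assigning a nonempty label set to every `Y`-vertex)
covering every edge. -/
def IsTotalCover (I : LabelCover X Y A B) (f : X → Finset A) (g : Y → Finset B) : Prop :=
  (∀ y, (g y).Nonempty) ∧ ∀ e ∈ I.E, I.Covers f g e

/-- A total-cover is tight if every `Y`-vertex receives exactly one label. -/
def Tight (g : Y → Finset B) : Prop := ∀ y, (g y).card = 1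

end LabelCover

/-- The cost of a labeling: the average number of labels assigned to `X`-vertices. -/
def lcCost {X A : Type*} [Fintype X] (f : X → Finset A) : ℚ :=
  (∑ x, ((f x).card : ℚ)) / (Fintype.card X : ℚ)


/-- The labels of the refined Label Cover instance: `L ∪ L′`, where `L = ⋃_x L_x`
with `L_x = {x} × A` and `L′ = ⋃_y L′_y` with `L′_y = {y} × B`. -/
abbrev Lab (X Y A B : Type*) := (X × A) ⊕ (Y × B)

/-- The propositional variables of the canonical pure Horn CNF construction:
`u ℓ` for labels `ℓ ∈ L ∪ L′`, `e x y i` and `el x y ℓ′ i` for edges `(x,y)`,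
labels `ℓ′ ∈ L′_y` and indices `i ∈ [d]`, and `v j` for `j ∈ [t]`. -/
inductive PV (X Y A B : Type*) where
  | u : Lab X Y A B → PV X Y A B
  | e : X → Y → ℕ → PV X Y A B
  | el : X → Y → B → ℕ → PV X Y A B
  | v : ℕ → PV X Y A B
deriving DecidableEq

section Canonical

variable {X Y A B : Type*} [Fintype X] [Fintype Y] [Fintype A] [Fintype B]
  [DecidableEq X] [DecidableEq Y] [DecidableEq A] [DecidableEq B]

/-- The (open) neighborhood `N(y) = {z ∈ X : (z,y) ∈ E}`. -/
def Nbr (I : LabelCover X Y A B) (y : Y) : Finset X :=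
  Finset.univ.filter fun z => (z, y) ∈ I.E

/-- Clauses (a): `u(ℓ) ∧ u(ℓ′) → e(x,y,ℓ′,i)` for `(x,y) ∈ E`, `(ℓ,ℓ′) ∈ Π_{(x,y)}`,
`i ∈ [d]`. -/
def clA (I : LabelCover X Y A B) (d : ℕ) : Finset (Clause (PV X Y A B)) :=
  (I.E ×ˢ Finset.Icc 1 d).biUnion fun p =>
    (I.cst p.1).image fun ab =>
      ⟨{PV.el p.1.1 p.1.2 ab.2 p.2},
       {PV.u (Sum.inl (p.1.1, ab.1)), PV.u (Sum.inr (p.1.2, ab.2))}⟩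

/-- Clauses (b): `⋀_{z ∈ N(y)} e(z,y,ℓ′,i) → e(x,y,i)` for `(x,y) ∈ E`, `ℓ′ ∈ L′_y`,
`i ∈ [d]`. -/
def clB (I : LabelCover X Y A B) (d : ℕ) : Finset (Clause (PV X Y A B)) :=
  ((I.E ×ˢ (Finset.univ : Finset B)) ×ˢ Finset.Icc 1 d).image fun p =>
    ⟨{PV.e p.1.1.1 p.1.1.2 p.2},
     (Nbr I p.1.1.2).image fun z => PV.el z p.1.1.2 p.1.2 p.2⟩

/-- Clauses (c): `e(x,y,i) → e(x,y,ℓ′,i)` for `(x,y) ∈ E`, `ℓ′ ∈ L′_y`, `i ∈ [d]`. -/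
def clC (I : LabelCover X Y A B) (d : ℕ) : Finset (Clause (PV X Y A B)) :=
  ((I.E ×ˢ (Finset.univ : Finset B)) ×ˢ Finset.Icc 1 d).image fun p =>
    ⟨{PV.el p.1.1.1 p.1.1.2 p.1.2 p.2}, {PV.e p.1.1.1 p.1.1.2 p.2}⟩

/-- The common body of the clauses (d): all variables `e(x,y,i)`, `(x,y) ∈ E`, `i ∈ [d]`. -/
def bigBody (I : LabelCover X Y A B) (d : ℕ) : Finset (PV X Y A B) :=
  (I.E ×ˢ Finset.Icc 1 d).image fun p => PV.e p.1.1 p.1.2 p.2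

/-- Clauses (d): `⋀_{i ∈ [d]} ⋀_{(x,y) ∈ E} e(x,y,i) → u(ℓ)` for `ℓ ∈ L ∪ L′`. -/
def clD (I : LabelCover X Y A B) (d : ℕ) : Finset (Clause (PV X Y A B)) :=
  (Finset.univ : Finset (Lab X Y A B)).image fun ℓ => ⟨{PV.u ℓ}, bigBody I d⟩

/-- Clauses (e): `v(j) → u(ℓ)` for `j ∈ [t]`, `ℓ ∈ L ∪ L′`. -/
def clE (X Y A B : Type*) [Fintype X] [Fintype Y] [Fintype A] [Fintype B]
    [DecidableEq X] [DecidableEq Y] [DecidableEq A] [DecidableEq B]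
    (t : ℕ) : Finset (Clause (PV X Y A B)) :=
  (Finset.Icc 1 t ×ˢ (Finset.univ : Finset (Lab X Y A B))).image fun p =>
    ⟨{PV.u p.2}, {PV.v p.1}⟩

/-- The canonical formula `Ψ`: clauses of types (a)–(d). -/
def PsiCNF (I : LabelCover X Y A B) (d : ℕ) : Finset (Clause (PV X Y A B)) :=
  clA I d ∪ clB I d ∪ clC I d ∪ clD I d

/-- The canonical formula `Φ`: clauses of types (a)–(e). -/
def PhiCNF (I : LabelCover X Y A B) (d t : ℕ) : Finset (Clause (PV X Y A B)) :=
  PsiCNF I d ∪ clE X Y A B t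

/-- The pure Horn function `h` represented by the canonical formula `Φ`. -/
def hFun (I : LabelCover X Y A B) (d t : ℕ) : (PV X Y A B → Bool) → Prop :=
  fun a => evalCNF (PhiCNF I d t) a

/-- The pure Horn function `g` represented by the canonical formula `Ψ`. -/
def gFun (I : LabelCover X Y A B) (d : ℕ) : (PV X Y A B → Bool) → Prop :=
  fun a => evalCNF (PsiCNF I d) a

end Canonical

set_option linter.unusedSectionVars false

section AuxLemmas

variable {V : Type*}

lemma fc_subset (Φ : Finset (Clause V)) (Q : Set V) : Q ⊆ fcClosure Φ Q :=
  Set.subset_sInter fun _ hT => hT.1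

lemma fc_closed (Φ : Finset (Clause V)) (Q : Set V) :
    ∀ C ∈ Φ, ∀ v : V, C.pos = {v} → ↑C.neg ⊆ fcClosure Φ Q → v ∈ fcClosure Φ Q := by
  intro C hC v hv hneg
  rw [fcClosure, Set.mem_sInter]
  intro T hT
  exact hT.2 C hC v hv (hneg.trans (Set.sInter_subset_of_mem hT))

lemma head_exists [DecidableEq V]
    (Φ Θ : Finset (Clause V)) (hΦ : IsPureHornCNF Φ) (hΘ : IsPureHornCNF Θ)
    (heq : ∀ a, evalCNF Θ a ↔ evalCNF Φ a)
    {C : Clause V} (hC : C ∈ Φ) : ∃ D ∈ Θ, D.pos = C.pos := by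
  classical
  obtain ⟨hcl, v, hv⟩ : C.IsClause ∧ ∃ v, C.pos = {v} := ⟨(hΦ C hC).1, (hΦ C hC).2⟩
  set T : Set V := fcClosure Φ ↑C.neg with hTdef
  let a : V → Bool := fun w => if w ∈ T then true else false
  have haT : ∀ w, a w = true ↔ w ∈ T := by intro w; simp [a]
  have hsat : evalCNF Φ a := by
    intro D hD
    obtain ⟨hDcl, w, hw⟩ := hΦ D hD
    by_cases hb : (↑D.neg : Set V) ⊆ T
    · exact Or.inl ⟨w, by simp [hw], (haT w).mpr (fc_closed Φ _ D hD w hw hb)⟩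
    · obtain ⟨u, hu, huT⟩ := Set.not_subset.mp hb
      exact Or.inr ⟨u, Finset.mem_coe.mp hu, by simp [a, huT]⟩
  have hvT : v ∈ T := fc_closed Φ _ C hC v hv (fc_subset Φ _)
  set a' : V → Bool := Function.update a v false with ha'def
  have hCa' : ¬ C.eval a' := by
    rintro (⟨w, hwp, hwt⟩ | ⟨w, hwn, hwf⟩)
    · rw [hv, Finset.mem_singleton] at hwp
      subst hwp
      simp [a', Function.update_self] at hwt
    · have hwv : w ≠ v := fun h =>
        (Finset.disjoint_left.mp hcl (hv ▸ Finset.mem_singleton_self v)) (h ▸ hwn)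
      rw [ha'def, Function.update_of_ne hwv] at hwf
      have hwT : w ∈ T := fc_subset Φ _ (Finset.mem_coe.mpr hwn)
      rw [(haT w).mpr hwT] at hwf
      exact Bool.noConfusion hwf
  have hΘa : evalCNF Θ a := (heq a).mpr hsat
  have hΘa' : ¬ evalCNF Θ a' := fun h => hCa' (((heq a').mp h) C hC)
  simp only [evalCNF, not_forall, Classical.not_imp] at hΘa'
  obtain ⟨D, hD, hDa'⟩ := hΘa'
  refine ⟨D, hD, ?_⟩
  obtain ⟨hDcl, w', hw'⟩ := hΘ D hD
  rcases hΘa D hD with ⟨w, hwp, hwt⟩ | ⟨w, hwn, hwf⟩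
  · by_cases hwv : w = v
    · subst hwv
      rw [hw', Finset.mem_singleton] at hwp
      rw [hw', hv, hwp]
    · exact absurd (Or.inl ⟨w, hwp, by rwa [ha'def, Function.update_of_ne hwv]⟩) hDa'
  · by_cases hwv : w = v
    · subst hwv
      rw [(haT w).mpr hvT] at hwf
      exact Bool.noConfusion hwf
    · exact absurd (Or.inr ⟨w, hwn, by rwa [ha'def, Function.update_of_ne hwv]⟩) hDa'

end AuxLemmas

section SpecLemmas

variable {X Y A B : Type*} [Fintype X] [Fintype Y] [Fintype A] [Fintype B]
  [DecidableEq X] [DecidableEq Y] [DecidableEq A] [DecidableEq B]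

lemma psi_pure (I : LabelCover X Y A B) (d : ℕ) : IsPureHornCNF (PsiCNF I d) := by
  intro C hC
  simp only [PsiCNF, Finset.mem_union] at hC
  rcases hC with ((hC | hC) | hC) | hC
  · simp only [clA, Finset.mem_biUnion, Finset.mem_image] at hC
    obtain ⟨p, hp, ab, hab, rfl⟩ := hC
    exact ⟨by simp [Clause.IsClause, Finset.disjoint_left], _, rfl⟩
  · simp only [clB, Finset.mem_image] at hC
    obtain ⟨p, hp, rfl⟩ := hC
    exact ⟨by simp [Clause.IsClause, Finset.disjoint_left], _, rfl⟩
  · simp only [clC, Finset.mem_image] at hC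
    obtain ⟨p, hp, rfl⟩ := hC
    exact ⟨by simp [Clause.IsClause, Finset.disjoint_left], _, rfl⟩
  · simp only [clD, Finset.mem_image] at hC
    obtain ⟨ℓ, hℓ, rfl⟩ := hC
    refine ⟨?_, _, rfl⟩
    simp only [Clause.IsClause, Finset.disjoint_left, bigBody, Finset.mem_image,
      Finset.mem_singleton]
    rintro x rfl ⟨p, hp, h⟩
    cases h

lemma fiberA (I : LabelCover X Y A B) (d : ℕ) (x : X) (y : Y) (b : B) (i : ℕ) :
    ((clA I d).filter (fun C => C.pos = ({PV.el x y b i} : Finset (PV X Y A B)))).card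
      ≤ Fintype.card A := by
  have hsub : (clA I d).filter (fun C => C.pos = ({PV.el x y b i} : Finset (PV X Y A B))) ⊆
      (Finset.univ : Finset A).image (fun a =>
        (⟨{PV.el x y b i}, {PV.u (Sum.inl (x, a)), PV.u (Sum.inr (y, b))}⟩ :
          Clause (PV X Y A B))) := by
    intro c hc
    simp only [Finset.mem_filter, clA, Finset.mem_biUnion, Finset.mem_image] at hc
    obtain ⟨⟨p, hp, ab, hab, rfl⟩, hpos⟩ := hc
    simp only [Finset.singleton_inj, PV.el.injEq] at hpos
    obtain ⟨rfl, rfl, rfl, rfl⟩ := hpos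
    exact Finset.mem_image.mpr ⟨ab.1, Finset.mem_univ _, rfl⟩
  exact (Finset.card_le_card hsub).trans (Finset.card_image_le.trans (by simp))

lemma fiberB (I : LabelCover X Y A B) (d : ℕ) (x : X) (y : Y) (i : ℕ) :
    ((clB I d).filter (fun C => C.pos = ({PV.e x y i} : Finset (PV X Y A B)))).card
      ≤ Fintype.card B := by
  have hsub : (clB I d).filter (fun C => C.pos = ({PV.e x y i} : Finset (PV X Y A B))) ⊆
      (Finset.univ : Finset B).image (fun b =>
        (⟨{PV.e x y i}, (Nbr I y).image fun z => PV.el z y b i⟩ : Clause (PV X Y A B))) := by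
    intro c hc
    simp only [Finset.mem_filter, clB, Finset.mem_image] at hc
    obtain ⟨⟨p, hp, rfl⟩, hpos⟩ := hc
    simp only [Finset.singleton_inj, PV.e.injEq] at hpos
    obtain ⟨rfl, rfl, rfl⟩ := hpos
    exact Finset.mem_image.mpr ⟨p.1.2, Finset.mem_univ _, rfl⟩
  exact (Finset.card_le_card hsub).trans (Finset.card_image_le.trans (by simp))

lemma fiberC (I : LabelCover X Y A B) (d : ℕ) (p : Finset (PV X Y A B)) :
    ((clC I d).filter (fun C => C.pos = p)).card ≤ 1 := by
  refine Finset.card_le_one.mpr ?_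
  intro c hc c' hc'
  simp only [Finset.mem_filter, clC, Finset.mem_image] at hc hc'
  obtain ⟨⟨q, hq, rfl⟩, hpos⟩ := hc
  obtain ⟨⟨q', hq', rfl⟩, hpos'⟩ := hc'
  rw [← hpos'] at hpos
  simp only [Finset.singleton_inj, PV.el.injEq] at hpos
  obtain ⟨h1, h2, h3, h4⟩ := hpos
  simp [h1, h2, h3, h4]

lemma fiberD (I : LabelCover X Y A B) (d : ℕ) (p : Finset (PV X Y A B)) :
    ((clD I d).filter (fun C => C.pos = p)).card ≤ 1 := by
  refine Finset.card_le_one.mpr ?_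
  intro c hc c' hc'
  simp only [Finset.mem_filter, clD, Finset.mem_image] at hc hc'
  obtain ⟨⟨q, hq, rfl⟩, hpos⟩ := hc
  obtain ⟨⟨q', hq', rfl⟩, hpos'⟩ := hc'
  rw [← hpos'] at hpos
  simp only [Finset.singleton_inj, PV.u.injEq] at hpos
  simp [hpos]

lemma psi_card_le (I : LabelCover X Y A B) (d : ℕ) [Nonempty A] [Nonempty B] :
    (PsiCNF I d).card ≤
      (Fintype.card A + Fintype.card B) * ((PsiCNF I d).image Clause.pos).card := by
  have hA : 1 ≤ Fintype.card A := Fintype.card_pos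
  have hB : 1 ≤ Fintype.card B := Fintype.card_pos
  apply Finset.card_le_mul_card_image
  intro p hp
  obtain ⟨C, hC, rfl⟩ := Finset.mem_image.mp hp
  obtain ⟨hcl, w, hw⟩ := psi_pure I d C hC
  rw [hw]
  -- helper to decompose membership
  rcases w with ℓ | ⟨x, y, i⟩ | ⟨x, y, b, i⟩ | j
  · -- head u ℓ : only clD
    have hsub : (PsiCNF I d).filter (fun c => c.pos = ({PV.u ℓ} : Finset (PV X Y A B))) ⊆
        (clD I d).filter (fun c => c.pos = ({PV.u ℓ} : Finset (PV X Y A B))) := by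
      intro c hc
      simp only [Finset.mem_filter, PsiCNF, Finset.mem_union] at hc ⊢
      obtain ⟨hmem, hpos⟩ := hc
      refine ⟨?_, hpos⟩
      rcases hmem with ((h | h) | h) | h
      · simp only [clA, Finset.mem_biUnion, Finset.mem_image] at h
        obtain ⟨q, hq, ab, hab, rfl⟩ := h
        simp at hpos
      · simp only [clB, Finset.mem_image] at h
        obtain ⟨q, hq, rfl⟩ := h
        simp at hpos
      · simp only [clC, Finset.mem_image] at h
        obtain ⟨q, hq, rfl⟩ := h
        simp at hpos
      · exact h
    calc ((PsiCNF I d).filter _).card ≤ _ := Finset.card_le_card hsub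
      _ ≤ 1 := fiberD I d _
      _ ≤ _ := by omega
  · -- head e x y i : only clB
    have hsub : (PsiCNF I d).filter (fun c => c.pos = ({PV.e x y i} : Finset (PV X Y A B))) ⊆
        (clB I d).filter (fun c => c.pos = ({PV.e x y i} : Finset (PV X Y A B))) := by
      intro c hc
      simp only [Finset.mem_filter, PsiCNF, Finset.mem_union] at hc ⊢
      obtain ⟨hmem, hpos⟩ := hc
      refine ⟨?_, hpos⟩
      rcases hmem with ((h | h) | h) | h
      · simp only [clA, Finset.mem_biUnion, Finset.mem_image] at h
        obtain ⟨q, hq, ab, hab, rfl⟩ := h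
        simp at hpos
      · exact h
      · simp only [clC, Finset.mem_image] at h
        obtain ⟨q, hq, rfl⟩ := h
        simp at hpos
      · simp only [clD, Finset.mem_image] at h
        obtain ⟨ℓ, hℓ, rfl⟩ := h
        simp at hpos
    calc ((PsiCNF I d).filter _).card ≤ _ := Finset.card_le_card hsub
      _ ≤ Fintype.card B := fiberB I d x y i
      _ ≤ _ := by omega
  · -- head el x y b i : clA ∪ clC
    have hsub : (PsiCNF I d).filter
          (fun c => c.pos = ({PV.el x y b i} : Finset (PV X Y A B))) ⊆
        (clA I d).filter (fun c => c.pos = ({PV.el x y b i} : Finset (PV X Y A B))) ∪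
        (clC I d).filter (fun c => c.pos = ({PV.el x y b i} : Finset (PV X Y A B))) := by
      intro c hc
      simp only [Finset.mem_filter, PsiCNF, Finset.mem_union] at hc ⊢
      obtain ⟨hmem, hpos⟩ := hc
      rcases hmem with ((h | h) | h) | h
      · exact Or.inl ⟨h, hpos⟩
      · simp only [clB, Finset.mem_image] at h
        obtain ⟨q, hq, rfl⟩ := h
        simp at hpos
      · exact Or.inr ⟨h, hpos⟩
      · simp only [clD, Finset.mem_image] at h
        obtain ⟨ℓ, hℓ, rfl⟩ := h
        simp at hpos
    calc ((PsiCNF I d).filter _).card ≤ _ := Finset.card_le_card hsub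
      _ ≤ _ + _ := Finset.card_union_le _ _
      _ ≤ Fintype.card A + 1 := Nat.add_le_add (fiberA I d x y b i) (fiberC I d _)
      _ ≤ _ := by omega
  · -- head v j : impossible
    exfalso
    simp only [PsiCNF, Finset.mem_union] at hC
    rcases hC with ((h | h) | h) | h
    · simp only [clA, Finset.mem_biUnion, Finset.mem_image] at h
      obtain ⟨q, hq, ab, hab, rfl⟩ := h
      simp at hw
    · simp only [clB, Finset.mem_image] at h
      obtain ⟨q, hq, rfl⟩ := h
      simp at hw
    · simp only [clC, Finset.mem_image] at h
      obtain ⟨q, hq, rfl⟩ := h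
      simp at hw
    · simp only [clD, Finset.mem_image] at h
      obtain ⟨ℓ, hℓ, rfl⟩ := h
      simp at hw

end SpecLemmas

/-- If `Θ` is a clause minimum prime pure Horn CNF representation of
the canonical exclusive-component function `g`, then
`|Ψ|_c/(λ+λ′) ≤ |Θ|_c ≤ |Ψ|_c`. -/
theorem psi_clause_bounds
    {X Y A B : Type*} [Fintype X] [Fintype Y] [Fintype A] [Fintype B]
    [DecidableEq X] [DecidableEq Y] [DecidableEq A] [DecidableEq B]
    [Nonempty X] [Nonempty Y]
    (I : LabelCover X Y A B) (d : ℕ) (hd : 1 ≤ d)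
    (hnoIsoX : ∀ x : X, ∃ y, (x, y) ∈ I.E)
    (hnoIsoY : ∀ y : Y, ∃ x, (x, y) ∈ I.E)
    (Θ : Finset (Clause (PV X Y A B)))
    (hPH : IsPureHornCNF Θ)
    (hprime : ∀ C ∈ Θ, PrimeImplicate (gFun I d) C)
    (hrep : Represents Θ (gFun I d))
    (hmin : ∀ Θ' : Finset (Clause (PV X Y A B)), IsPureHornCNF Θ' →
      Represents Θ' (gFun I d) → Θ.card ≤ Θ'.card) :
    ((PsiCNF I d).card : ℚ) / ((Fintype.card A : ℚ) + (Fintype.card B : ℚ)) ≤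
      (Θ.card : ℚ) ∧
    Θ.card ≤ (PsiCNF I d).card := by
  classical
  obtain ⟨x0⟩ := ‹Nonempty X›
  obtain ⟨y0, hxy⟩ := hnoIsoX x0
  obtain ⟨ab0, hab0⟩ := I.cst_nonempty _ hxy
  have hNA : Nonempty A := ⟨ab0.1⟩
  have hNB : Nonempty B := ⟨ab0.2⟩
  have hΨrep : Represents (PsiCNF I d) (gFun I d) := fun a => Iff.rfl
  have hΨph : IsPureHornCNF (PsiCNF I d) := psi_pure I d
  have hup : Θ.card ≤ (PsiCNF I d).card := hmin _ hΨph hΨrep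
  refine ⟨?_, hup⟩
  have hheads : (PsiCNF I d).image Clause.pos ⊆ Θ.image Clause.pos := by
    intro p hp
    obtain ⟨C, hC, rfl⟩ := Finset.mem_image.mp hp
    obtain ⟨D, hD, hDp⟩ := head_exists (PsiCNF I d) Θ hΨph hPH (fun a => hrep a) hC
    exact Finset.mem_image.mpr ⟨D, hD, hDp⟩
  have h1 : (PsiCNF I d).card ≤ (Fintype.card A + Fintype.card B) * Θ.card :=
    (psi_card_le I d).trans (Nat.mul_le_mul_left _
      ((Finset.card_le_card hheads).trans Finset.card_image_le))
  have hA : 1 ≤ Fintype.card A := Fintype.card_pos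
  have hpos : (0 : ℚ) < (Fintype.card A : ℚ) + (Fintype.card B : ℚ) := by
    have : (1 : ℚ) ≤ (Fintype.card A : ℚ) := by exact_mod_cast hA
    have hB0 : (0 : ℚ) ≤ (Fintype.card B : ℚ) := by positivity
    linarith
  rw [div_le_iff₀ hpos]
  have h1' : ((PsiCNF I d).card : ℚ) ≤
      ((Fintype.card A : ℚ) + (Fintype.card B : ℚ)) * (Θ.card : ℚ) := by
    exact_mod_cast h1
  linarith
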